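/- Let θ ∈ ℝ with 2Re(T) + 3 ≠ 0 and cosθ ≠ 1, where T = 2cos²θ + 2cosθ - 1 + 2i sinθ(1 - cosθ). Then cosθ = ((|T|² - 5)/4 + 2Re(T) + 2)/(2Re(T) + 3) and i sinθ = i·Im(T)/(2(1 - cosθ)). In particular, e^{iθ} lies in the field ℚ(T, conj(T)). -/

import Mathlib

open Complex

theorem eigenvalue_in_trace_field (θ : ℝ)
    (T : ℂ)
    (hT : T = 2 * (Real.cos θ : ℂ)^2 + 2 * Real.cos θ - 1
      + 2 * I * Real.sin θ * (1 - Real.cos θ))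
    (h1 : 2 * T.re + 3 ≠ 0) (h2 : Real.cos θ ≠ 1) :
    Real.cos θ = ((‖T‖ ^ 2 - 5)/4 + 2 * T.re + 2) / (2 * T.re + 3)
    ∧ I * Real.sin θ = I * T.im / (2 * (1 - (Real.cos θ : ℂ)))
    ∧ Complex.exp (θ * I) ∈ Subfield.closure {T, (starRingEnd ℂ) T} := by
  set c := Real.cos θ with hc
  set s := Real.sin θ with hs
  have hre : T.re = 2*c^2 + 2*c - 1 := by
    rw [hT]
    simp [Complex.add_re, Complex.sub_re, Complex.mul_re,
      Complex.mul_im, Complex.I_re, Complex.I_im, Complex.ofReal_re, Complex.ofReal_im, pow_two,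
      Complex.cos_ofReal_re, Complex.sin_ofReal_re]
  have him : T.im = 2*s*(1-c) := by
    rw [hT]
    simp [Complex.add_im, Complex.sub_im, Complex.mul_re,
      Complex.mul_im, Complex.I_re, Complex.I_im, Complex.ofReal_re, Complex.ofReal_im, pow_two,
      Complex.cos_ofReal_re, Complex.sin_ofReal_re]
  have habs : ‖T‖ ^ 2 = T.re^2 + T.im^2 := by
    rw [Complex.sq_norm, Complex.normSq_apply]; ring
  have hsc : s^2 = 1 - c^2 := by
    have := Real.sin_sq_add_cos_sq θ; rw [← hc, ← hs] at this; linarith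
  have hcne : (1:ℝ) - c ≠ 0 := by intro h; apply h2; linarith
  have key1 : c = ((‖T‖ ^ 2 - 5)/4 + 2 * T.re + 2) / (2 * T.re + 3) := by
    rw [habs, hre, him]
    rw [eq_div_iff (by rw [hre] at h1; exact h1)]
    have h1' : (2*(2*c^2+2*c-1)+3 : ℝ) ≠ 0 := by rw [hre] at h1; exact h1
    linear_combination (-(1-c)^2) * hsc
  refine ⟨key1, ?_, ?_⟩
  · rw [him]
    have : ((2:ℂ) * (1 - (c:ℂ))) ≠ 0 := by
      simp only [ne_eq, mul_eq_zero]
      push_neg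
      constructor
      · norm_num
      · intro h
        apply hcne
        have := congrArg Complex.re h
        simpa using this
    rw [eq_div_iff this]
    push_cast
    ring
  · have hT1 : T ∈ Subfield.closure {T, (starRingEnd ℂ) T} :=
      Subfield.subset_closure (Set.mem_insert _ _)
    have hT2 : (starRingEnd ℂ) T ∈ Subfield.closure {T, (starRingEnd ℂ) T} :=
      Subfield.subset_closure (Set.mem_insert_of_mem _ rfl)
    set K := Subfield.closure {T, (starRingEnd ℂ) T} with hK
    have hmc : T * (starRingEnd ℂ) T = ((‖T‖ ^ 2 : ℝ) : ℂ) := by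
      rw [Complex.mul_conj, Complex.sq_norm]
    have hac : T + (starRingEnd ℂ) T = 2 * (T.re : ℂ) := by
      rw [Complex.add_conj]; push_cast; ring
    have hsub : T - (starRingEnd ℂ) T = 2 * (T.im : ℂ) * I := by
      rw [Complex.sub_conj]; push_cast; ring
    have hccne : (1:ℂ) - (c:ℂ) ≠ 0 := by
      intro h
      apply hcne
      have := congrArg Complex.re h
      simpa using this
    have hA : ((T * (starRingEnd ℂ) T - 5)/4 + (T + (starRingEnd ℂ) T) + 2) /
        ((T + (starRingEnd ℂ) T) + 3) = (c : ℂ) := by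
      rw [hmc, hac]
      rw [key1]
      have hd : (2 * (T.re:ℂ) + 3) ≠ 0 := by
        intro h
        apply h1
        have := congrArg Complex.re h
        simpa using this
      push_cast
      rw [div_eq_div_iff (by push_cast at hd ⊢; exact hd) (by push_cast at hd ⊢; exact hd)]
    have hB : (T - (starRingEnd ℂ) T)/(4*(1 - (c:ℂ))) = (s:ℂ) * I := by
      rw [hsub, him]
      push_cast
      rw [div_eq_iff (by
        intro h
        rcases mul_eq_zero.1 h with h|h
        · norm_num at h
        · exact hccne h)]
      ring
    have hexp : Complex.exp (θ * I) =
        ((T * (starRingEnd ℂ) T - 5)/4 + (T + (starRingEnd ℂ) T) + 2) /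
          ((T + (starRingEnd ℂ) T) + 3)
        + (T - (starRingEnd ℂ) T)/(4*(1 -
          ((T * (starRingEnd ℂ) T - 5)/4 + (T + (starRingEnd ℂ) T) + 2) /
          ((T + (starRingEnd ℂ) T) + 3))) := by
      rw [hA, hB, Complex.exp_mul_I, ← Complex.ofReal_cos, ← Complex.ofReal_sin]
    rw [hexp]
    have hint : ∀ n : ℤ, ((n : ℂ)) ∈ K := fun n => intCast_mem K n
    have h2' : (2:ℂ) ∈ K := by exact_mod_cast hint 2
    have h3' : (3:ℂ) ∈ K := by exact_mod_cast hint 3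
    have h4' : (4:ℂ) ∈ K := by exact_mod_cast hint 4
    have h5' : (5:ℂ) ∈ K := by exact_mod_cast hint 5
    have h1' : (1:ℂ) ∈ K := K.one_mem
    have hnum : ((T * (starRingEnd ℂ) T - 5)/4 + (T + (starRingEnd ℂ) T) + 2) ∈ K :=
      K.add_mem (K.add_mem (K.div_mem (K.sub_mem (K.mul_mem hT1 hT2) h5') h4')
        (K.add_mem hT1 hT2)) h2'
    have hAmem : ((T * (starRingEnd ℂ) T - 5)/4 + (T + (starRingEnd ℂ) T) + 2) /
        ((T + (starRingEnd ℂ) T) + 3) ∈ K :=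
      K.div_mem hnum (K.add_mem (K.add_mem hT1 hT2) h3')
    exact K.add_mem hAmem (K.div_mem (K.sub_mem hT1 hT2)
      (K.mul_mem h4' (K.sub_mem h1' hAmem)))
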